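/- Boundedness of the Poisson operator from the homogeneous Besov space to L^q: for 1 < q < ∞ there is c such that for every f ∈ Ḃ^{−1/q}_q(ℝ^{n−1}), the harmonic extension u(x', x_n) = P_{x_n} f(x') = c_n ∫_{ℝ^{n−1}} x_n (|x'−y'|² + x_n²)^{−n/2} f(y') dy' satisfies ‖u‖_{L^q(ℝⁿ₊)} ≤ c ‖f‖_{Ḃ^{−1/q}_q(ℝ^{n−1})}. -/

import Mathlib

open MeasureTheory Real
open scoped ENNReal

/-- The heat kernel on `ℝᵐ`. -/
noncomputable def heatKernel (m : ℕ) (x : EuclideanSpace ℝ (Fin m)) (t : ℝ) : ℝ :=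
  (4 * π * t) ^ (-(m : ℝ) / 2) * Real.exp (-‖x‖ ^ 2 / (4 * t))

/-- The homogeneous Besov norm `‖f‖_{Ḃ^s_{q,q}(ℝᵐ)}` of negative order `s < 0`,
via the thermic (heat semigroup) characterization
`(∫₀^∞ (t^{-s/2} ‖e^{tΔ}f‖_{L^q})^q dt/t)^{1/q}`. -/
noncomputable def besovNorm (m : ℕ) (s q : ℝ) (f : EuclideanSpace ℝ (Fin m) → ℝ) : ℝ≥0∞ :=
  (∫⁻ t in Set.Ioi (0 : ℝ),
      ENNReal.ofReal (t ^ (-s * q / 2 - 1)) *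
        (eLpNorm (fun x => ∫ y, heatKernel m (x - y) t * f y)
          (ENNReal.ofReal q) volume) ^ q) ^ (1 / q)

open Set

/-! ### Auxiliary Gamma-type integrals -/

lemma key_inv (a r : ℝ) (ha : 0 < a) (hr : 0 < r) :
    IntegrableOn (fun s : ℝ => s ^ (-a - 1) * Real.exp (-(r / s))) (Set.Ioi 0) ∧
    ∫ s in Set.Ioi 0, s ^ (-a - 1) * Real.exp (-(r / s)) = (1 / r) ^ a * Real.Gamma a := by
  set g : ℝ → ℝ := fun x => x ^ (a - 1) * Real.exp (-(r * x)) with hg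
  have hderiv : ∀ x ∈ Ioi (0:ℝ), HasDerivWithinAt (fun y : ℝ => y⁻¹) (-(x ^ 2)⁻¹) (Ioi 0) x :=
    fun x hx => (hasDerivAt_inv (ne_of_gt hx)).hasDerivWithinAt
  have hinj : InjOn (fun y : ℝ => y⁻¹) (Ioi 0) := fun x _ y _ h => inv_injective h
  have himg : (fun y : ℝ => y⁻¹) '' Ioi 0 = Ioi 0 := by
    ext x
    constructor
    · rintro ⟨y, hy, rfl⟩; exact inv_pos.mpr (mem_Ioi.mp hy)
    · intro hx; exact ⟨x⁻¹, mem_Ioi.mpr (inv_pos.mpr (mem_Ioi.mp hx)), inv_inv x⟩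
  have hgi : IntegrableOn g (Ioi 0) := by
    have h := integrableOn_rpow_mul_exp_neg_mul_rpow (p := 1) (s := a - 1) (b := r)
      (by linarith) one_pos hr
    refine h.congr_fun (fun x hx => ?_) measurableSet_Ioi
    simp only [Real.rpow_one, hg]; ring_nf
  have heq : ∀ x ∈ Ioi (0:ℝ),
      |(-(x ^ 2)⁻¹)| • g x⁻¹ = x ^ (-a - 1) * Real.exp (-(r / x)) := by
    intro x hx
    have hx0 : (0:ℝ) < x := hx
    have hxn : x ^ (2:ℝ) = x ^ (2:ℕ) := by
      rw [show (2:ℝ) = ((2:ℕ):ℝ) by norm_num, Real.rpow_natCast]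
    have h1 : |(-(x ^ 2)⁻¹)| = x ^ (-2 : ℝ) := by
      rw [abs_neg, abs_inv, abs_of_nonneg (by positivity : (0:ℝ) ≤ x ^ 2)]
      rw [show (-2:ℝ) = -(2:ℝ) by norm_num, Real.rpow_neg hx0.le, hxn]
    have h2 : (x⁻¹ : ℝ) ^ (a - 1) = x ^ (-(a - 1)) := by
      rw [← Real.rpow_neg_one x, ← Real.rpow_mul hx0.le]
      ring_nf
    have h3 : r * x⁻¹ = r / x := by rw [div_eq_mul_inv]
    rw [smul_eq_mul, hg, h1]
    simp only []
    rw [h2, h3]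
    rw [show x ^ (-2:ℝ) * (x ^ (-(a-1)) * Real.exp (-(r / x)))
        = (x ^ (-2:ℝ) * x ^ (-(a-1))) * Real.exp (-(r / x)) by ring,
      ← Real.rpow_add hx0]
    ring_nf
  constructor
  · have := (integrableOn_image_iff_integrableOn_abs_deriv_smul measurableSet_Ioi hderiv hinj
      g).mp (by rwa [himg])
    exact this.congr_fun heq measurableSet_Ioi
  · have hval := integral_image_eq_integral_abs_deriv_smul measurableSet_Ioi hderiv hinj g
    rw [himg] at hval
    rw [← setIntegral_congr_fun measurableSet_Ioi heq, ← hval, hg]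
    exact Real.integral_rpow_mul_exp_neg_mul_Ioi ha hr

lemma four_rpow (b : ℝ) : (4:ℝ) ^ b = 2 ^ (2*b) := by
  rw [show (4:ℝ) = 2 ^ (2:ℝ) by
      rw [show (2:ℝ) = ((2:ℕ):ℝ) by norm_num, Real.rpow_natCast]; norm_num,
    ← Real.rpow_mul (by norm_num : (0:ℝ) ≤ 2)]

/-- The subordination kernel. -/
noncomputable def subord (t s : ℝ) : ℝ :=
  t / (2 * Real.sqrt π) * s ^ (-3/2 : ℝ) * Real.exp (-(t ^ 2 / 4 / s))

lemma subord_nonneg {t s : ℝ} (ht : 0 ≤ t) (hs : 0 < s) : 0 ≤ subord t s := by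
  refine mul_nonneg (mul_nonneg (div_nonneg ht (by positivity)) ?_) (Real.exp_nonneg _)
  exact Real.rpow_nonneg hs.le _

lemma subord_pos {t s : ℝ} (ht : 0 < t) (hs : 0 < s) : 0 < subord t s := by
  refine mul_pos (mul_pos (div_pos ht (by positivity)) ?_) (Real.exp_pos _)
  exact Real.rpow_pos_of_pos hs _

lemma heatKernel_nonneg {m : ℕ} {z : EuclideanSpace ℝ (Fin m)} {s : ℝ} (hs : 0 < s) :
    0 ≤ heatKernel m z s :=
  mul_nonneg (Real.rpow_nonneg (by positivity) _) (Real.exp_nonneg _)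

/-- Pointwise subordination formula: the Poisson kernel is the subordinated heat kernel. -/
lemma subord_heat (m : ℕ) (t : ℝ) (z : EuclideanSpace ℝ (Fin m)) (ht : 0 < t) :
    IntegrableOn (fun s => subord t s * heatKernel m z s) (Set.Ioi 0) ∧
    ∫ s in Set.Ioi 0, subord t s * heatKernel m z s
      = (Real.Gamma (((m : ℝ) + 1) / 2) / π ^ (((m : ℝ) + 1) / 2)) * t *
          (‖z‖ ^ 2 + t ^ 2) ^ (-((m : ℝ) + 1) / 2) := by
  set a : ℝ := ((m : ℝ) + 1) / 2 with ha_def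
  have ha : 0 < a := by positivity
  set R : ℝ := ‖z‖ ^ 2 + t ^ 2 with hR_def
  have hR : 0 < R := by positivity
  set c₁ : ℝ := t / (2 * Real.sqrt π) * (4 * π) ^ (-(m : ℝ) / 2) with hc₁
  have heq : ∀ s ∈ Ioi (0:ℝ),
      subord t s * heatKernel m z s = c₁ * (s ^ (-a - 1) * Real.exp (-(R / 4 / s))) := by
    intro s hs
    have hs0 : (0:ℝ) < s := hs
    have hsplit : (4 * π * s) ^ (-(m : ℝ) / 2)
        = (4 * π) ^ (-(m : ℝ) / 2) * s ^ (-(m : ℝ) / 2) :=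
      Real.mul_rpow (by positivity) hs0.le
    have hexp : Real.exp (-(t ^ 2 / 4 / s)) * Real.exp (-‖z‖ ^ 2 / (4 * s))
        = Real.exp (-(R / 4 / s)) := by
      rw [← Real.exp_add]; congr 1; field_simp; ring
    have hpow : s ^ (-3/2 : ℝ) * s ^ (-(m : ℝ) / 2) = s ^ (-a - 1) := by
      rw [← Real.rpow_add hs0]; congr 1; rw [ha_def]; ring
    calc subord t s * heatKernel m z s
        = (t / (2 * Real.sqrt π) * (4 * π) ^ (-(m : ℝ) / 2)) *
            ((s ^ (-3/2 : ℝ) * s ^ (-(m : ℝ) / 2)) *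
              (Real.exp (-(t ^ 2 / 4 / s)) * Real.exp (-‖z‖ ^ 2 / (4 * s)))) := by
          rw [subord, heatKernel, hsplit]; ring
      _ = c₁ * (s ^ (-a - 1) * Real.exp (-(R / 4 / s))) := by rw [hpow, hexp, hc₁]
  have hkey := key_inv a (R / 4) ha (by positivity)
  constructor
  · exact MeasureTheory.IntegrableOn.congr_fun (hkey.1.const_mul c₁)
      (fun s hs => (heq s hs).symm) measurableSet_Ioi
  · rw [setIntegral_congr_fun measurableSet_Ioi heq, MeasureTheory.integral_const_mul, hkey.2,
      show (-((m:ℝ)+1)/2) = -a by rw [ha_def]; ring]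
    have h4R : (1 / (R / 4) : ℝ) = 4 / R := by field_simp
    have hdiv : ((4:ℝ) / R) ^ a = 4 ^ a * R ^ (-a) := by
      rw [Real.div_rpow (by norm_num) hR.le, Real.rpow_neg hR.le, div_eq_mul_inv]
    have h1 : ((4:ℝ) * π) ^ (-(m : ℝ) / 2) = 4 ^ (-(m : ℝ) / 2) * π ^ (-(m : ℝ) / 2) :=
      Real.mul_rpow (by norm_num) pi_pos.le
    have h2 : (4:ℝ) ^ (-(m : ℝ) / 2) * 4 ^ a = 2 := by
      rw [← Real.rpow_add (by norm_num : (0:ℝ) < 4), show -(m:ℝ)/2 + a = 1/2 by rw [ha_def]; ring,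
        four_rpow]
      norm_num
    have h3 : π ^ (-(m : ℝ) / 2) / Real.sqrt π = π ^ (-a) := by
      rw [Real.sqrt_eq_rpow, ← Real.rpow_sub pi_pos]; congr 1; rw [ha_def]; ring
    have h5 : Real.Gamma a / π ^ a = Real.Gamma a * π ^ (-a) := by
      rw [Real.rpow_neg pi_pos.le, div_eq_mul_inv]
    rw [h4R, hdiv, hc₁, h1, h5]
    rw [show t / (2 * Real.sqrt π) * (4 ^ (-(m:ℝ) / 2) * π ^ (-(m:ℝ) / 2)) *
          (4 ^ a * R ^ (-a) * Real.Gamma a)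
        = (4 ^ (-(m:ℝ) / 2) * 4 ^ a) * (π ^ (-(m:ℝ) / 2) / Real.sqrt π) * t * R ^ (-a) *
            Real.Gamma a / 2 from by ring, h2, h3]
    ring

/-- The subordination kernel is a probability density in `s`. -/
lemma subord_mass (t : ℝ) (ht : 0 < t) :
    IntegrableOn (fun s => subord t s) (Set.Ioi 0) ∧
    ∫ s in Set.Ioi 0, subord t s = 1 := by
  have hr : (0:ℝ) < t ^ 2 / 4 := by positivity
  have hkey := key_inv (1/2) (t ^ 2 / 4) (by norm_num) hr
  have heq : ∀ s ∈ Ioi (0:ℝ),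
      (t / (2 * Real.sqrt π)) * (s ^ (-(1/2:ℝ) - 1) * Real.exp (-(t ^ 2 / 4 / s)))
        = subord t s := by
    intro s hs
    rw [subord, show (-(1/2:ℝ) - 1) = (-3/2 : ℝ) by norm_num]
    ring
  constructor
  · exact MeasureTheory.IntegrableOn.congr_fun
      (hkey.1.const_mul (t / (2 * Real.sqrt π))) heq measurableSet_Ioi
  · rw [← setIntegral_congr_fun measurableSet_Ioi heq, MeasureTheory.integral_const_mul, hkey.2,
      Real.Gamma_one_half_eq]
    have h1 : (1 / (t ^ 2 / 4) : ℝ) = (2 / t) ^ 2 := by field_simp; ring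
    have h2 : ((2 / t : ℝ) ^ 2) ^ (1/2 : ℝ) = 2 / t := by
      rw [← Real.rpow_natCast (2/t) 2, ← Real.rpow_mul (by positivity)]
      norm_num
    rw [h1, h2]
    have hsπ : Real.sqrt π ≠ 0 := by positivity
    field_simp

lemma tmass_aux (s : ℝ) (hs : 0 < s) :
    IntegrableOn (fun t => t * Real.exp (-(t ^ 2 / 4 / s))) (Set.Ioi 0) ∧
    ∫ t in Set.Ioi 0, t * Real.exp (-(t ^ 2 / 4 / s)) = 2 * s := by
  have hint : IntegrableOn (fun t => t * Real.exp (-(t ^ 2 / 4 / s))) (Set.Ioi 0) := by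
    have h := integrableOn_rpow_mul_exp_neg_mul_sq (b := (4 * s)⁻¹) (by positivity)
      (s := 1) (by norm_num)
    refine h.congr_fun (fun x hx => ?_) measurableSet_Ioi
    simp only [Real.rpow_one]
    congr 1
    congr 1
    field_simp
  refine ⟨hint, ?_⟩
  have hderiv : ∀ x ∈ Ici (0:ℝ),
      HasDerivAt (fun t : ℝ => -(2 * s) * Real.exp (-(t ^ 2 / 4 / s)))
        (x * Real.exp (-(x ^ 2 / 4 / s))) x := by
    intro x _
    have h1 : HasDerivAt (fun t : ℝ => -(t ^ 2 / 4 / s)) (-(x / (2 * s))) x := by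
      have := ((hasDerivAt_pow 2 x).div_const 4).div_const s
      have h2 := this.neg
      refine h2.congr_deriv ?_
      field_simp
      ring
    have h2 := (h1.exp).const_mul (-(2 * s))
    refine h2.congr_deriv ?_
    field_simp
  have htend : Filter.Tendsto (fun t : ℝ => -(2 * s) * Real.exp (-(t ^ 2 / 4 / s)))
      Filter.atTop (nhds 0) := by
    have h1 : Filter.Tendsto (fun t : ℝ => -(t ^ 2 / 4 / s)) Filter.atTop Filter.atBot := by
      apply Filter.tendsto_neg_atTop_atBot.comp
      apply Filter.Tendsto.atTop_div_const (by positivity : (0:ℝ) < s)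
      apply Filter.Tendsto.atTop_div_const (by norm_num : (0:ℝ) < 4)
      exact Filter.tendsto_pow_atTop (by norm_num)
    have h2 := Real.tendsto_exp_atBot.comp h1
    have h3 := h2.const_mul (-(2 * s))
    simpa using h3
  have := integral_Ioi_of_hasDerivAt_of_tendsto' hderiv hint htend
  rw [this]
  norm_num

/-- Mass of the subordination kernel in the `t` variable. -/
lemma subord_tmass (s : ℝ) (hs : 0 < s) :
    IntegrableOn (fun t => subord t s) (Set.Ioi 0) ∧
    ∫ t in Set.Ioi 0, subord t s = s ^ (-(1:ℝ)/2) / Real.sqrt π := by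
  have heq : ∀ t ∈ Ioi (0:ℝ),
      (s ^ (-3/2:ℝ) / (2 * Real.sqrt π)) * (t * Real.exp (-(t ^ 2 / 4 / s))) = subord t s := by
    intro t ht
    rw [subord]; ring
  constructor
  · exact MeasureTheory.IntegrableOn.congr_fun
      ((tmass_aux s hs).1.const_mul _) heq measurableSet_Ioi
  · rw [← setIntegral_congr_fun measurableSet_Ioi heq, MeasureTheory.integral_const_mul,
      (tmass_aux s hs).2]
    have hpow : s ^ (-3/2:ℝ) * s ^ (1:ℝ) = s ^ (-(1:ℝ)/2) := by
      rw [← Real.rpow_add hs]; norm_num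
    rw [← hpow, Real.rpow_one]
    have hsπ : Real.sqrt π ≠ 0 := by positivity
    field_simp

/-! ### Measurability -/

lemma meas_hk {m : ℕ} :
    Measurable (fun p : (EuclideanSpace ℝ (Fin m) × ℝ) × EuclideanSpace ℝ (Fin m) =>
      heatKernel m (p.1.1 - p.2) p.1.2) := by
  unfold heatKernel
  fun_prop

lemma meas_pk {m : ℕ} :
    Measurable (fun p : (EuclideanSpace ℝ (Fin m) × ℝ) × EuclideanSpace ℝ (Fin m) =>
      (Real.Gamma (((m : ℝ) + 1) / 2) / Real.pi ^ (((m : ℝ) + 1) / 2)) *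
        p.1.2 * (‖p.1.1 - p.2‖ ^ 2 + p.1.2 ^ 2) ^ (-((m : ℝ) + 1) / 2)) := by
  fun_prop

lemma meas_H {m : ℕ} {f : EuclideanSpace ℝ (Fin m) → ℝ} (hf : Measurable f) :
    StronglyMeasurable (fun p : EuclideanSpace ℝ (Fin m) × ℝ =>
      ∫ y, heatKernel m (p.1 - y) p.2 * f y) :=
  (meas_hk.mul (hf.comp measurable_snd)).stronglyMeasurable.integral_prod_right'

lemma meas_F {m : ℕ} {f : EuclideanSpace ℝ (Fin m) → ℝ} (hf : Measurable f) :
    StronglyMeasurable (fun p : EuclideanSpace ℝ (Fin m) × ℝ =>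
      ∫ y, (Real.Gamma (((m : ℝ) + 1) / 2) / Real.pi ^ (((m : ℝ) + 1) / 2)) *
        p.2 * (‖p.1 - y‖ ^ 2 + p.2 ^ 2) ^ (-((m : ℝ) + 1) / 2) * f y) :=
  (meas_pk.mul (hf.comp measurable_snd)).stronglyMeasurable.integral_prod_right'

lemma meas_subord : Measurable (fun p : ℝ × ℝ => subord p.1 p.2) := by
  unfold subord; fun_prop

/-! ### The main pointwise estimate -/

lemma key2 (m : ℕ) (q : ℝ) (hq : 1 < q) (f : EuclideanSpace ℝ (Fin m) → ℝ)
    (hf : Measurable f) (x : EuclideanSpace ℝ (Fin m)) (t : ℝ) (ht : t ∈ Ioi (0:ℝ)) :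
    (‖∫ y, (Real.Gamma (((m : ℝ) + 1) / 2) / Real.pi ^ (((m : ℝ) + 1) / 2)) *
        t * (‖x - y‖ ^ 2 + t ^ 2) ^ (-((m : ℝ) + 1) / 2) * f y‖₊ : ℝ≥0∞) ^ q
      ≤ ∫⁻ s in Ioi (0:ℝ), ENNReal.ofReal (subord t s) *
          (‖∫ y, heatKernel m (x - y) s * f y‖₊ : ℝ≥0∞) ^ q := by
  have ht0 : (0:ℝ) < t := ht
  have hq0 : (0:ℝ) < q := lt_trans one_pos hq
  set C : ℝ := Real.Gamma (((m : ℝ) + 1) / 2) / Real.pi ^ (((m : ℝ) + 1) / 2) with hC_def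
  have hC : 0 < C := by
    rw [hC_def]
    have h1 : 0 < Real.Gamma (((m : ℝ) + 1) / 2) := Real.Gamma_pos_of_pos (by positivity)
    positivity
  set H : ℝ → ℝ := fun s => ∫ y, heatKernel m (x - y) s * f y with hH_def
  have measHs : Measurable H := by
    have := (meas_H hf).measurable.comp
      ((measurable_const.prodMk measurable_id) : Measurable fun s : ℝ =>
        ((x, s) : EuclideanSpace ℝ (Fin m) × ℝ))
    exact this
  -- Step 1: pointwise domination of the Poisson extension by the subordinated heat extension
  have key1 : (‖∫ y, C * t * (‖x - y‖ ^ 2 + t ^ 2) ^ (-((m : ℝ) + 1) / 2) * f y‖₊ : ℝ≥0∞)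
      ≤ ∫⁻ s in Ioi (0:ℝ), ENNReal.ofReal (subord t s) * (‖H s‖₊ : ℝ≥0∞) := by
    by_cases hI : Integrable
        (fun y => C * t * (‖x - y‖ ^ 2 + t ^ 2) ^ (-((m : ℝ) + 1) / 2) * f y) volume
    · set Φ : ℝ × EuclideanSpace ℝ (Fin m) → ℝ :=
        fun w => subord t w.1 * (heatKernel m (x - w.2) w.1 * f w.2) with hΦ_def
      have hΦmeas : Measurable Φ := by
        apply Measurable.mul
        · exact meas_subord.comp (measurable_const.prodMk measurable_fst)
        · exact (meas_hk.comp
            (((measurable_const.prodMk measurable_fst)).prodMk measurable_snd)).mul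
            (hf.comp measurable_snd)
      have L1 : ∀ z : EuclideanSpace ℝ (Fin m),
          ∫⁻ s in Ioi (0:ℝ), ENNReal.ofReal (subord t s * heatKernel m z s)
            = ENNReal.ofReal (C * t * (‖z‖ ^ 2 + t ^ 2) ^ (-((m : ℝ) + 1) / 2)) := by
        intro z
        rw [← ofReal_integral_eq_lintegral_ofReal (subord_heat m t z ht0).1
          ((ae_restrict_iff' measurableSet_Ioi).mpr (Filter.Eventually.of_forall fun s hs =>
            mul_nonneg (subord_nonneg ht0.le hs) (heatKernel_nonneg hs))),
          (subord_heat m t z ht0).2]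
      have hmeas_s : ∀ y : EuclideanSpace ℝ (Fin m),
          Measurable fun s : ℝ => ENNReal.ofReal (subord t s * heatKernel m (x - y) s) := by
        intro y
        apply ENNReal.measurable_ofReal.comp
        exact (meas_subord.comp (measurable_const.prodMk measurable_id)).mul
          (meas_hk.comp (((measurable_const.prodMk measurable_id)).prodMk measurable_const))
      have hfin : ∫⁻ w, (‖Φ w‖₊ : ℝ≥0∞) ∂(((volume : Measure ℝ).restrict (Ioi 0)).prod volume)
          < ⊤ := by
        have hcalc : ∫⁻ w, (‖Φ w‖₊ : ℝ≥0∞)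
              ∂(((volume : Measure ℝ).restrict (Ioi 0)).prod volume)
            = ∫⁻ y, ENNReal.ofReal
                (C * t * (‖x - y‖ ^ 2 + t ^ 2) ^ (-((m : ℝ) + 1) / 2)) * ‖f y‖₊ := by
          rw [lintegral_prod _ hΦmeas.nnnorm.coe_nnreal_ennreal.aemeasurable]
          have h1 : (∫⁻ s in Ioi (0:ℝ), ∫⁻ y, (‖Φ (s, y)‖₊ : ℝ≥0∞))
              = ∫⁻ s in Ioi (0:ℝ), ∫⁻ y,
                  ENNReal.ofReal (subord t s * heatKernel m (x - y) s) * ‖f y‖₊ := by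
            refine setLIntegral_congr_fun measurableSet_Ioi
              ( fun s hs => ?_)
            refine lintegral_congr fun y => ?_
            have hΦval : Φ (s, y) = (subord t s * heatKernel m (x - y) s) * f y := by
              rw [hΦ_def]; ring
            rw [hΦval, nnnorm_mul, ENNReal.coe_mul,
              ((enorm_eq_nnnorm _).symm.trans <| Real.enorm_eq_ofReal (mul_nonneg (subord_nonneg ht0.le hs)
                (heatKernel_nonneg hs)))]
          rw [h1, lintegral_lintegral_swap]
          · refine lintegral_congr fun y => ?_
            rw [lintegral_mul_const _ (hmeas_s y), L1 (x - y)]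
          · refine AEMeasurable.mul (f := fun p : ℝ × EuclideanSpace ℝ (Fin m) =>
              ENNReal.ofReal (subord t p.1 * heatKernel m (x - p.2) p.1))
              (g := fun p => (‖f p.2‖₊ : ℝ≥0∞)) ?_ ?_
            · apply Measurable.aemeasurable
              apply ENNReal.measurable_ofReal.comp
              exact (meas_subord.comp (measurable_const.prodMk measurable_fst)).mul
                (meas_hk.comp (((measurable_const.prodMk measurable_fst)).prodMk
                  measurable_snd))
            · exact ((hf.comp measurable_snd).nnnorm.coe_nnreal_ennreal).aemeasurable
        rw [hcalc]
        have hfi : ∫⁻ y, (‖C * t * (‖x - y‖ ^ 2 + t ^ 2) ^ (-((m : ℝ) + 1) / 2) * f y‖₊ : ℝ≥0∞)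
            ∂volume < ⊤ := hI.hasFiniteIntegral
        refine lt_of_eq_of_lt (lintegral_congr fun y => ?_) hfi
        rw [nnnorm_mul, ENNReal.coe_mul, ((enorm_eq_nnnorm _).symm.trans <| Real.enorm_eq_ofReal (by positivity :
          (0:ℝ) ≤ C * t * (‖x - y‖ ^ 2 + t ^ 2) ^ (-((m : ℝ) + 1) / 2)))]
      have hΦint : Integrable Φ (((volume : Measure ℝ).restrict (Ioi 0)).prod volume) :=
        ⟨hΦmeas.aestronglyMeasurable, hfin⟩
      have hFeq : (∫ y, C * t * (‖x - y‖ ^ 2 + t ^ 2) ^ (-((m : ℝ) + 1) / 2) * f y)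
          = ∫ s in Ioi (0:ℝ), subord t s * H s := by
        have hswap := integral_integral_swap (f := fun s y => Φ (s, y))
          (by exact hΦint)
        calc (∫ y, C * t * (‖x - y‖ ^ 2 + t ^ 2) ^ (-((m : ℝ) + 1) / 2) * f y)
            = ∫ y, (∫ s in Ioi (0:ℝ), subord t s * heatKernel m (x - y) s) * f y := by
              refine integral_congr_ae (Filter.Eventually.of_forall fun y => ?_)
              beta_reduce
              rw [(subord_heat m t (x - y) ht0).2]
          _ = ∫ y, ∫ s in Ioi (0:ℝ), subord t s * (heatKernel m (x - y) s * f y) := by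
              refine integral_congr_ae (Filter.Eventually.of_forall fun y => ?_)
              beta_reduce
              rw [← MeasureTheory.integral_mul_const]
              refine integral_congr_ae (Filter.Eventually.of_forall fun s => ?_)
              ring
          _ = ∫ s in Ioi (0:ℝ), ∫ y, subord t s * (heatKernel m (x - y) s * f y) :=
              hswap.symm
          _ = ∫ s in Ioi (0:ℝ), subord t s * H s := by
              refine integral_congr_ae (Filter.Eventually.of_forall fun s => ?_)
              beta_reduce
              rw [hH_def, MeasureTheory.integral_const_mul]
      rw [hFeq]
      refine le_trans (enorm_integral_le_lintegral_enorm _) (le_of_eq ?_)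
      refine setLIntegral_congr_fun measurableSet_Ioi
        ( fun s hs => ?_)
      rw [enorm_mul, Real.enorm_eq_ofReal (subord_nonneg ht0.le hs), enorm_eq_nnnorm]
    · rw [integral_undef hI]
      simp
  -- Step 2: Jensen (via Hölder) to pull the q-th power inside
  set p' : ℝ := q / (q - 1) with hp'_def
  have hq1 : (0:ℝ) < q - 1 := by linarith
  have hpq : p'.HolderConjugate q := by
    rw [Real.holderConjugate_iff]
    constructor
    · rw [hp'_def]
      rw [lt_div_iff₀ hq1]
      linarith
    · rw [hp'_def]
      field_simp
      ring
  have hp'0 : p' ≠ 0 := by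
    rw [hp'_def]
    positivity
  have hL2 : ∫⁻ s in Ioi (0:ℝ), ENNReal.ofReal (subord t s) = 1 := by
    rw [← ofReal_integral_eq_lintegral_ofReal (subord_mass t ht0).1
      ((ae_restrict_iff' measurableSet_Ioi).mpr (Filter.Eventually.of_forall fun s hs =>
        subord_nonneg ht0.le hs)), (subord_mass t ht0).2, ENNReal.ofReal_one]
  set u : ℝ → ℝ≥0∞ := fun s => ENNReal.ofReal (subord t s) ^ (1/p') with hu_def
  set v : ℝ → ℝ≥0∞ := fun s => ENNReal.ofReal (subord t s) ^ (1/q) * (‖H s‖₊ : ℝ≥0∞)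
    with hv_def
  have humeas : AEMeasurable u ((volume : Measure ℝ).restrict (Ioi 0)) := by
    apply Measurable.aemeasurable
    apply Measurable.pow_const
    exact ENNReal.measurable_ofReal.comp
      (meas_subord.comp (measurable_const.prodMk measurable_id))
  have hvmeas : AEMeasurable v ((volume : Measure ℝ).restrict (Ioi 0)) := by
    apply Measurable.aemeasurable
    apply Measurable.mul
    · apply Measurable.pow_const
      exact ENNReal.measurable_ofReal.comp
        (meas_subord.comp (measurable_const.prodMk measurable_id))
    · exact measHs.nnnorm.coe_nnreal_ennreal
  have huv : ∀ s ∈ Ioi (0:ℝ), ENNReal.ofReal (subord t s) * (‖H s‖₊ : ℝ≥0∞) = (u * v) s := by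
    intro s hs
    have hne : ENNReal.ofReal (subord t s) ≠ 0 :=
      (ENNReal.ofReal_pos.mpr (subord_pos ht0 hs)).ne'
    have htop : ENNReal.ofReal (subord t s) ≠ ⊤ := ENNReal.ofReal_ne_top
    rw [Pi.mul_apply, hu_def, hv_def]
    rw [← mul_assoc, ← ENNReal.rpow_add _ _ hne htop,
      show (1/p' + 1/q : ℝ) = 1 by rw [one_div, one_div, hpq.inv_add_inv_eq_one],
      ENNReal.rpow_one]
  have hholder : (∫⁻ s in Ioi (0:ℝ), ENNReal.ofReal (subord t s) * (‖H s‖₊ : ℝ≥0∞))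
      ≤ (∫⁻ s in Ioi (0:ℝ),
          ENNReal.ofReal (subord t s) * (‖H s‖₊ : ℝ≥0∞) ^ q) ^ (1/q) := by
    have h1 : (∫⁻ s in Ioi (0:ℝ), ENNReal.ofReal (subord t s) * (‖H s‖₊ : ℝ≥0∞))
        = ∫⁻ s in Ioi (0:ℝ), (u * v) s :=
      setLIntegral_congr_fun measurableSet_Ioi huv
    rw [h1]
    refine le_trans (ENNReal.lintegral_mul_le_Lp_mul_Lq _ hpq humeas hvmeas) ?_
    have h2 : (∫⁻ s in Ioi (0:ℝ), u s ^ p') = 1 := by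
      have heq : ∀ s ∈ Ioi (0:ℝ), u s ^ p' = ENNReal.ofReal (subord t s) := by
        intro s hs
        rw [hu_def]
        beta_reduce
        rw [← ENNReal.rpow_mul, one_div_mul_cancel hp'0, ENNReal.rpow_one]
      rw [setLIntegral_congr_fun measurableSet_Ioi heq, hL2]
    have h3 : ∀ s ∈ Ioi (0:ℝ),
        v s ^ q = ENNReal.ofReal (subord t s) * (‖H s‖₊ : ℝ≥0∞) ^ q := by
      intro s hs
      rw [hv_def]
      beta_reduce
      rw [ENNReal.mul_rpow_of_nonneg _ _ hq0.le, ← ENNReal.rpow_mul,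
        one_div_mul_cancel hq0.ne', ENNReal.rpow_one]
    rw [h2, ENNReal.one_rpow, one_mul,
      setLIntegral_congr_fun measurableSet_Ioi h3]
  calc (‖∫ y, C * t * (‖x - y‖ ^ 2 + t ^ 2) ^ (-((m : ℝ) + 1) / 2) * f y‖₊ : ℝ≥0∞) ^ q
      ≤ (∫⁻ s in Ioi (0:ℝ), ENNReal.ofReal (subord t s) * (‖H s‖₊ : ℝ≥0∞)) ^ q :=
        ENNReal.rpow_le_rpow key1 hq0.le
    _ ≤ ((∫⁻ s in Ioi (0:ℝ),
          ENNReal.ofReal (subord t s) * (‖H s‖₊ : ℝ≥0∞) ^ q) ^ (1/q)) ^ q :=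
        ENNReal.rpow_le_rpow hholder hq0.le
    _ = ∫⁻ s in Ioi (0:ℝ), ENNReal.ofReal (subord t s) * (‖H s‖₊ : ℝ≥0∞) ^ q := by
        rw [← ENNReal.rpow_mul, one_div_mul_cancel hq0.ne', ENNReal.rpow_one]

/-! ### Main theorem -/

lemma main_meas (m : ℕ) (q : ℝ) (hq : 1 < q) (f : EuclideanSpace ℝ (Fin m) → ℝ)
    (hf : Measurable f) :
    eLpNorm (fun p : EuclideanSpace ℝ (Fin m) × ℝ =>
        ∫ y' : EuclideanSpace ℝ (Fin m),
          (Real.Gamma (((m : ℝ) + 1) / 2) / Real.pi ^ (((m : ℝ) + 1) / 2)) *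
            p.2 * (‖p.1 - y'‖ ^ 2 + p.2 ^ 2) ^ (-((m : ℝ) + 1) / 2) * f y')
      (ENNReal.ofReal q)
      ((volume : Measure (EuclideanSpace ℝ (Fin m))).prod
        ((volume : Measure ℝ).restrict (Set.Ioi 0)))
    ≤ besovNorm m (-1 / q) q f := by
  have hq0 : (0:ℝ) < q := lt_trans one_pos hq
  have hqne : ENNReal.ofReal q ≠ 0 := by
    simp only [ne_eq, ENNReal.ofReal_eq_zero, not_le]; linarith
  have hqtop : ENNReal.ofReal q ≠ ⊤ := ENNReal.ofReal_ne_top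
  set H : EuclideanSpace ℝ (Fin m) → ℝ → ℝ :=
    fun x s => ∫ y, heatKernel m (x - y) s * f y with hH_def
  have measH : Measurable (fun p : EuclideanSpace ℝ (Fin m) × ℝ => H p.1 p.2) :=
    (meas_H hf).measurable
  rw [eLpNorm_eq_lintegral_rpow_enorm_toReal hqne hqtop, ENNReal.toReal_ofReal hq0.le, besovNorm]
  simp only [enorm_eq_nnnorm]
  refine ENNReal.rpow_le_rpow ?_ (by positivity : (0:ℝ) ≤ 1/q)
  have step1 : ∫⁻ p, (‖∫ y, (Real.Gamma (((m : ℝ) + 1) / 2) / Real.pi ^ (((m : ℝ) + 1) / 2)) *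
          p.2 * (‖p.1 - y‖ ^ 2 + p.2 ^ 2) ^ (-((m : ℝ) + 1) / 2) * f y‖₊ : ℝ≥0∞) ^ q
        ∂((volume : Measure (EuclideanSpace ℝ (Fin m))).prod
          ((volume : Measure ℝ).restrict (Set.Ioi 0)))
      = ∫⁻ x, ∫⁻ t in Ioi (0:ℝ),
          (‖∫ y, (Real.Gamma (((m : ℝ) + 1) / 2) / Real.pi ^ (((m : ℝ) + 1) / 2)) *
            t * (‖x - y‖ ^ 2 + t ^ 2) ^ (-((m : ℝ) + 1) / 2) * f y‖₊ : ℝ≥0∞) ^ q := by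
    exact lintegral_prod _ ((meas_F hf).measurable.nnnorm.coe_nnreal_ennreal.pow_const _).aemeasurable
  rw [step1]
  have step2 : ∀ x : EuclideanSpace ℝ (Fin m),
      (∫⁻ t in Ioi (0:ℝ),
        (‖∫ y, (Real.Gamma (((m : ℝ) + 1) / 2) / Real.pi ^ (((m : ℝ) + 1) / 2)) *
          t * (‖x - y‖ ^ 2 + t ^ 2) ^ (-((m : ℝ) + 1) / 2) * f y‖₊ : ℝ≥0∞) ^ q)
      ≤ ∫⁻ s in Ioi (0:ℝ), ENNReal.ofReal (s ^ (-(1:ℝ)/2)) * (‖H x s‖₊ : ℝ≥0∞) ^ q := by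
    intro x
    have hmono : (∫⁻ t in Ioi (0:ℝ),
        (‖∫ y, (Real.Gamma (((m : ℝ) + 1) / 2) / Real.pi ^ (((m : ℝ) + 1) / 2)) *
          t * (‖x - y‖ ^ 2 + t ^ 2) ^ (-((m : ℝ) + 1) / 2) * f y‖₊ : ℝ≥0∞) ^ q)
        ≤ ∫⁻ t in Ioi (0:ℝ), ∫⁻ s in Ioi (0:ℝ),
            ENNReal.ofReal (subord t s) * (‖H x s‖₊ : ℝ≥0∞) ^ q := by
      refine lintegral_mono_ae ?_
      filter_upwards [ae_restrict_mem measurableSet_Ioi] with t ht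
      exact key2 m q hq f hf x t ht
    refine hmono.trans ?_
    have hswap : (∫⁻ t in Ioi (0:ℝ), ∫⁻ s in Ioi (0:ℝ),
          ENNReal.ofReal (subord t s) * (‖H x s‖₊ : ℝ≥0∞) ^ q)
        = ∫⁻ s in Ioi (0:ℝ), ∫⁻ t in Ioi (0:ℝ),
          ENNReal.ofReal (subord t s) * (‖H x s‖₊ : ℝ≥0∞) ^ q := by
      refine lintegral_lintegral_swap ?_
      apply AEMeasurable.mul
      · exact (ENNReal.measurable_ofReal.comp meas_subord).aemeasurable
      · exact ((measH.comp (measurable_const.prodMk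
          measurable_snd)).nnnorm.coe_nnreal_ennreal.pow_const _).aemeasurable
    rw [hswap]
    have heval : (∫⁻ s in Ioi (0:ℝ), ∫⁻ t in Ioi (0:ℝ),
          ENNReal.ofReal (subord t s) * (‖H x s‖₊ : ℝ≥0∞) ^ q)
        = ∫⁻ s in Ioi (0:ℝ),
            ENNReal.ofReal (s ^ (-(1:ℝ)/2) / Real.sqrt π) * (‖H x s‖₊ : ℝ≥0∞) ^ q := by
      refine lintegral_congr_ae ?_
      filter_upwards [ae_restrict_mem measurableSet_Ioi] with s hs
      have hmeas : Measurable fun t : ℝ => ENNReal.ofReal (subord t s) := by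
        have : Measurable fun t : ℝ => subord t s :=
          meas_subord.comp (measurable_id.prodMk measurable_const)
        exact ENNReal.measurable_ofReal.comp this
      rw [lintegral_mul_const _ hmeas,
        ← ofReal_integral_eq_lintegral_ofReal
        (subord_tmass s hs).1 ((ae_restrict_iff' measurableSet_Ioi).mpr
          (Filter.Eventually.of_forall fun t ht => subord_nonneg (le_of_lt ht) hs)),
        (subord_tmass s hs).2]
    rw [heval]
    refine lintegral_mono_ae ?_
    filter_upwards [ae_restrict_mem measurableSet_Ioi] with s hs
    refine mul_le_mul_left (ENNReal.ofReal_le_ofReal ?_) _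
    refine div_le_self (Real.rpow_nonneg hs.le _) ?_
    rw [show (1:ℝ) = Real.sqrt 1 from (Real.sqrt_one).symm]
    exact Real.sqrt_le_sqrt (by linarith [Real.pi_gt_three])
  calc ∫⁻ x, ∫⁻ t in Ioi (0:ℝ),
        (‖∫ y, (Real.Gamma (((m : ℝ) + 1) / 2) / Real.pi ^ (((m : ℝ) + 1) / 2)) *
          t * (‖x - y‖ ^ 2 + t ^ 2) ^ (-((m : ℝ) + 1) / 2) * f y‖₊ : ℝ≥0∞) ^ q
      ≤ ∫⁻ x, ∫⁻ s in Ioi (0:ℝ), ENNReal.ofReal (s ^ (-(1:ℝ)/2)) * (‖H x s‖₊ : ℝ≥0∞) ^ q :=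
        lintegral_mono step2
    _ = ∫⁻ s in Ioi (0:ℝ), ∫⁻ x, ENNReal.ofReal (s ^ (-(1:ℝ)/2)) * (‖H x s‖₊ : ℝ≥0∞) ^ q := by
        refine lintegral_lintegral_swap ?_
        apply AEMeasurable.mul
        · exact (ENNReal.measurable_ofReal.comp
            (by fun_prop : Measurable fun p : EuclideanSpace ℝ (Fin m) × ℝ =>
              p.2 ^ (-(1:ℝ)/2))).aemeasurable
        · exact (measH.nnnorm.coe_nnreal_ennreal.pow_const _).aemeasurable
    _ = ∫⁻ s in Ioi (0:ℝ), ENNReal.ofReal (s ^ (-(1:ℝ)/2)) * ∫⁻ x, (‖H x s‖₊ : ℝ≥0∞) ^ q := by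
        refine lintegral_congr fun s => ?_
        exact lintegral_const_mul _ (by fun_prop)
    _ = ∫⁻ s in Ioi (0:ℝ), ENNReal.ofReal (s ^ (-(-1/q) * q / 2 - 1)) *
          (eLpNorm (fun x => ∫ y, heatKernel m (x - y) s * f y) (ENNReal.ofReal q) volume) ^ q := by
        refine setLIntegral_congr_fun measurableSet_Ioi (
          fun s hs => ?_)
        rw [eLpNorm_eq_lintegral_rpow_enorm_toReal hqne hqtop]
        simp only [enorm_eq_nnnorm]
        rw [ENNReal.toReal_ofReal hq0.le,
          ← ENNReal.rpow_mul, one_div_mul_cancel hq0.ne', ENNReal.rpow_one,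
          show (-(-1/q) * q / 2 - 1 : ℝ) = -(1:ℝ)/2 by field_simp; norm_num]

/-- Boundedness of the Poisson operator from `Ḃ^{-1/q}_q(ℝ^{n-1})` to `L^q(ℝⁿ₊)`:
the harmonic extension `u(x',x_n) = c_n ∫ x_n (|x'-y'|² + x_n²)^{-n/2} f(y') dy'`
satisfies `‖u‖_{L^q(ℝⁿ₊)} ≤ c ‖f‖_{Ḃ^{-1/q}_q(ℝ^{n-1})}`. -/
theorem poisson_operator_besov_bound (m : ℕ) (hm : 1 ≤ m) (q : ℝ) (hq : 1 < q) :
    ∃ c : ℝ, 0 < c ∧ ∀ f : EuclideanSpace ℝ (Fin m) → ℝ,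
      eLpNorm (fun p : EuclideanSpace ℝ (Fin m) × ℝ =>
          ∫ y' : EuclideanSpace ℝ (Fin m),
            (Real.Gamma (((m : ℝ) + 1) / 2) / Real.pi ^ (((m : ℝ) + 1) / 2)) *
              p.2 * (‖p.1 - y'‖ ^ 2 + p.2 ^ 2) ^ (-((m : ℝ) + 1) / 2) * f y')
        (ENNReal.ofReal q)
        ((volume : Measure (EuclideanSpace ℝ (Fin m))).prod
          ((volume : Measure ℝ).restrict (Set.Ioi 0)))
      ≤ ENNReal.ofReal c * besovNorm m (-1 / q) q f := by
  refine ⟨1, one_pos, fun f => ?_⟩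
  rw [ENNReal.ofReal_one, one_mul]
  by_cases hf : AEStronglyMeasurable f volume
  · obtain ⟨g, hg, hfg⟩ := hf
    have hFg : (fun p : EuclideanSpace ℝ (Fin m) × ℝ =>
        ∫ y' : EuclideanSpace ℝ (Fin m),
          (Real.Gamma (((m : ℝ) + 1) / 2) / Real.pi ^ (((m : ℝ) + 1) / 2)) *
            p.2 * (‖p.1 - y'‖ ^ 2 + p.2 ^ 2) ^ (-((m : ℝ) + 1) / 2) * f y')
        = (fun p : EuclideanSpace ℝ (Fin m) × ℝ =>
        ∫ y' : EuclideanSpace ℝ (Fin m),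
          (Real.Gamma (((m : ℝ) + 1) / 2) / Real.pi ^ (((m : ℝ) + 1) / 2)) *
            p.2 * (‖p.1 - y'‖ ^ 2 + p.2 ^ 2) ^ (-((m : ℝ) + 1) / 2) * g y') := by
      funext p
      exact integral_congr_ae (hfg.mono fun y hy => by simp only [hy])
    have hBesov : besovNorm m (-1 / q) q f = besovNorm m (-1 / q) q g := by
      unfold besovNorm
      congr 1
      refine lintegral_congr fun t => ?_
      have heq : (fun x => ∫ y, heatKernel m (x - y) t * f y)
          = (fun x => ∫ y, heatKernel m (x - y) t * g y) :=
        funext fun x => integral_congr_ae (hfg.mono fun y hy => by simp only [hy])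
      rw [heq]
    rw [hFg, hBesov]
    exact main_meas m q hq g hg.measurable
  · have hzero : ∀ p : EuclideanSpace ℝ (Fin m) × ℝ, 0 < p.2 →
        (∫ y' : EuclideanSpace ℝ (Fin m),
          (Real.Gamma (((m : ℝ) + 1) / 2) / Real.pi ^ (((m : ℝ) + 1) / 2)) *
            p.2 * (‖p.1 - y'‖ ^ 2 + p.2 ^ 2) ^ (-((m : ℝ) + 1) / 2) * f y') = 0 := by
      intro p hp
      apply integral_undef
      intro hInt
      apply hf
      have hC : 0 < Real.Gamma (((m : ℝ) + 1) / 2) / Real.pi ^ (((m : ℝ) + 1) / 2) := by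
        have h1 : 0 < Real.Gamma (((m : ℝ) + 1) / 2) := Real.Gamma_pos_of_pos (by positivity)
        positivity
      have hk : ∀ y : EuclideanSpace ℝ (Fin m),
          (Real.Gamma (((m : ℝ) + 1) / 2) / Real.pi ^ (((m : ℝ) + 1) / 2)) *
            p.2 * (‖p.1 - y‖ ^ 2 + p.2 ^ 2) ^ (-((m : ℝ) + 1) / 2) ≠ 0 := by
        intro y
        have hbase : 0 < ‖p.1 - y‖ ^ 2 + p.2 ^ 2 :=
          add_pos_of_nonneg_of_pos (sq_nonneg _) (pow_pos hp 2)
        exact (mul_pos (mul_pos hC hp) (Real.rpow_pos_of_pos hbase _)).ne'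
      have hkm : Measurable fun y : EuclideanSpace ℝ (Fin m) =>
          (Real.Gamma (((m : ℝ) + 1) / 2) / Real.pi ^ (((m : ℝ) + 1) / 2)) *
            p.2 * (‖p.1 - y‖ ^ 2 + p.2 ^ 2) ^ (-((m : ℝ) + 1) / 2) :=
        meas_pk.comp (measurable_const.prodMk measurable_id)
      have h1 : AEStronglyMeasurable (fun y : EuclideanSpace ℝ (Fin m) =>
          ((Real.Gamma (((m : ℝ) + 1) / 2) / Real.pi ^ (((m : ℝ) + 1) / 2)) *
            p.2 * (‖p.1 - y‖ ^ 2 + p.2 ^ 2) ^ (-((m : ℝ) + 1) / 2))⁻¹ *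
          ((Real.Gamma (((m : ℝ) + 1) / 2) / Real.pi ^ (((m : ℝ) + 1) / 2)) *
            p.2 * (‖p.1 - y‖ ^ 2 + p.2 ^ 2) ^ (-((m : ℝ) + 1) / 2) * f y)) volume :=
        (hkm.inv.stronglyMeasurable.aestronglyMeasurable).mul hInt.1
      refine h1.congr (Filter.Eventually.of_forall fun y => ?_)
      beta_reduce
      rw [inv_mul_cancel_left₀ (hk y)]
    have hae : ∀ᵐ p ∂((volume : Measure (EuclideanSpace ℝ (Fin m))).prod
        ((volume : Measure ℝ).restrict (Set.Ioi 0))), 0 < p.2 := by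
      rw [ae_iff]
      refine measure_mono_null (fun p hp => ?_)
        (?_ : ((volume : Measure (EuclideanSpace ℝ (Fin m))).prod
          ((volume : Measure ℝ).restrict (Set.Ioi 0))) (Set.univ ×ˢ Set.Iic 0) = 0)
      · exact ⟨trivial, not_lt.mp hp⟩
      · rw [Measure.prod_prod, Measure.restrict_apply measurableSet_Iic,
          show Set.Iic (0:ℝ) ∩ Set.Ioi 0 = ∅ by
            ext z; simp only [Set.mem_inter_iff, Set.mem_Iic, Set.mem_Ioi, Set.mem_empty_iff_false,
              iff_false, not_and, not_lt]; exact fun h => h,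
          measure_empty, mul_zero]
    have hFae : (fun p : EuclideanSpace ℝ (Fin m) × ℝ =>
        ∫ y' : EuclideanSpace ℝ (Fin m),
          (Real.Gamma (((m : ℝ) + 1) / 2) / Real.pi ^ (((m : ℝ) + 1) / 2)) *
            p.2 * (‖p.1 - y'‖ ^ 2 + p.2 ^ 2) ^ (-((m : ℝ) + 1) / 2) * f y')
        =ᵐ[(volume : Measure (EuclideanSpace ℝ (Fin m))).prod
          ((volume : Measure ℝ).restrict (Set.Ioi 0))] 0 :=
      hae.mono fun p hp => hzero p hp
    rw [eLpNorm_congr_ae hFae, eLpNorm_zero]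
    exact zero_le
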